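/- For all natural numbers k, m₁, m₂ and all L > 0, V > 0, the sum ∑_{j=0}^k C(k,j) · V_{m₁,j} · V_{m₂,k-j} is at most 16 · V · V_{m₁+m₂,k}, where V_{m,j} := m! j! L^j V^{j+1} / ((m+1)²(j+1)²). -/

import Mathlib

set_option maxHeartbeats 1000000

open Finset

lemma aux_sum_inv_sq (n : ℕ) : ∑ j ∈ range (n+1), (1:ℝ)/(((j:ℝ)+1)^2) ≤ 2 := by
  have h : ∀ n : ℕ, ∑ j ∈ range (n+1), (1:ℝ)/(((j:ℝ)+1)^2) ≤ 2 - 1/((n:ℝ)+1) := by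
    intro n
    induction n with
    | zero => norm_num
    | succ n ih =>
      rw [Finset.sum_range_succ]
      have h1 : (0:ℝ) < (n:ℝ)+1 := by positivity
      have h2 : (0:ℝ) < (n:ℝ)+1+1 := by positivity
      have hstep : (1:ℝ)/((n:ℝ)+1+1)^2 ≤ 1/((n:ℝ)+1) - 1/((n:ℝ)+1+1) := by
        rw [div_sub_div _ _ (ne_of_gt h1) (ne_of_gt h2),
          div_le_div_iff₀ (by positivity) (by positivity)]
        ring_nf
        nlinarith
      push_cast
      linarith
  have h1 : (0:ℝ) < 1/((n:ℝ)+1) := by positivity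
  linarith [h n]

lemma aux_conv (k : ℕ) :
    ∑ j ∈ range (k+1), (1:ℝ)/((((j:ℝ)+1)^2) * ((((k-j:ℕ)):ℝ)+1)^2) ≤ 8/((k:ℝ)+1)^2 := by
  have hpt : ∀ j ∈ range (k+1),
      (1:ℝ)/((((j:ℝ)+1)^2) * ((((k-j:ℕ)):ℝ)+1)^2) ≤
        2/((k:ℝ)+2)^2 * (1/(((j:ℝ)+1)^2) + 1/(((((k-j:ℕ)):ℝ)+1)^2)) := by
    intro j hj
    rw [mem_range, Nat.lt_succ_iff] at hj
    set a : ℝ := (j:ℝ)+1 with ha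
    set b : ℝ := (((k-j:ℕ)):ℝ)+1 with hb
    have hab : a + b = (k:ℝ)+2 := by
      rw [ha, hb, Nat.cast_sub hj]; ring
    have hapos : 0 < a := by positivity
    have hbpos : 0 < b := by positivity
    rw [← hab]
    rw [div_add_div _ _ (by positivity) (by positivity), div_mul_div_comm,
      div_le_div_iff₀ (by positivity) (by positivity)]
    nlinarith [mul_nonneg (mul_nonneg (sq_nonneg a) (sq_nonneg b)) (sq_nonneg (a-b)),
      sq_nonneg (a*b), mul_pos hapos hbpos]
  have h1 := Finset.sum_le_sum hpt
  have hrefl : ∑ j ∈ range (k+1), (1:ℝ)/(((((k-j:ℕ)):ℝ)+1)^2)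
      = ∑ j ∈ range (k+1), (1:ℝ)/(((j:ℝ)+1)^2) := by
    have := Finset.sum_range_reflect (fun j => (1:ℝ)/(((j:ℝ)+1)^2)) (k+1)
    simpa using this
  have h2 : ∑ j ∈ range (k+1),
      2/((k:ℝ)+2)^2 * (1/(((j:ℝ)+1)^2) + 1/(((((k-j:ℕ)):ℝ)+1)^2)) ≤ 2/((k:ℝ)+2)^2 * 4 := by
    rw [← Finset.mul_sum]
    have hc : (0:ℝ) ≤ 2/((k:ℝ)+2)^2 := by positivity
    refine mul_le_mul_of_nonneg_left ?_ hc
    rw [Finset.sum_add_distrib, hrefl]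
    have := aux_sum_inv_sq k
    linarith
  have h3 : 2/((k:ℝ)+2)^2 * 4 ≤ 8/((k:ℝ)+1)^2 := by
    rw [div_mul_eq_mul_div, div_le_div_iff₀ (by positivity) (by positivity)]
    nlinarith [Nat.cast_nonneg (α := ℝ) k]
  linarith


lemma aux_alg (c f₁ f₂ g₁ g₂ d₁ d₂ dj dk l₁ l₂ v₁ v₂ : ℝ)
    (h₁ : d₁ ≠ 0) (h₂ : d₂ ≠ 0) (h₃ : dj ≠ 0) (h₄ : dk ≠ 0) :
    c * (f₁ * g₁ / (d₁ * dj) * l₁ * v₁) * (f₂ * g₂ / (d₂ * dk) * l₂ * v₂)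
      = c * g₁ * g₂ * (l₁ * l₂) * (v₁ * v₂) * (f₁ * f₂) / (d₁ * d₂) * (1 / (dj * dk)) := by
  field_simp

theorem stmt_3 (k m₁ m₂ : ℕ) (L V : ℝ) (hL : 0 < L) (hV : 0 < V)
    (Vf : ℕ → ℕ → ℝ)
    (hVf : ∀ m j : ℕ, Vf m j =
      ((Nat.factorial m : ℝ) * (Nat.factorial j : ℝ) /
          (((m : ℝ) + 1) ^ 2 * ((j : ℝ) + 1) ^ 2)) * L ^ j * V ^ (j + 1)) :
    ∑ j ∈ Finset.range (k + 1), (Nat.choose k j : ℝ) * Vf m₁ j * Vf m₂ (k - j) ≤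
      16 * V * Vf (m₁ + m₂) k := by
  set C : ℝ := (k.factorial : ℝ) * ((m₁.factorial : ℝ) * (m₂.factorial : ℝ)) /
      (((m₁:ℝ)+1)^2 * (((m₂:ℝ)+1)^2)) * L^k * V^(k+2) with hC
  have hCpos : 0 < C := by rw [hC]; positivity
  have hT : ∀ j ∈ range (k+1),
      (Nat.choose k j : ℝ) * Vf m₁ j * Vf m₂ (k - j)
        = C * (1/((((j:ℝ)+1)^2) * ((((k-j:ℕ)):ℝ)+1)^2)) := by
    intro j hj
    rw [mem_range, Nat.lt_succ_iff] at hj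
    have hfac : ((k.choose j : ℕ):ℝ) * (j.factorial : ℝ) * ((k - j).factorial : ℝ)
        = (k.factorial : ℝ) := by
      exact_mod_cast congrArg (Nat.cast (R := ℝ)) (Nat.choose_mul_factorial_mul_factorial hj)
    have hLp : L^j * L^(k-j) = L^k := by
      rw [← pow_add, Nat.add_sub_cancel' hj]
    have hVp : V^(j+1) * V^(k-j+1) = V^(k+2) := by
      rw [← pow_add]; congr 1; omega
    rw [hVf, hVf,
      aux_alg ((Nat.choose k j : ℕ):ℝ) (m₁.factorial : ℝ) (m₂.factorial : ℝ)
        (j.factorial : ℝ) (((k - j).factorial : ℕ):ℝ)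
        (((m₁:ℝ)+1)^2) (((m₂:ℝ)+1)^2) (((j:ℝ)+1)^2) (((((k-j:ℕ)):ℝ)+1)^2)
        (L^j) (L^(k-j)) (V^(j+1)) (V^((k-j)+1))
        (by positivity) (by positivity) (by positivity) (by positivity),
      hfac, hLp, hVp, hC]
    ring
  rw [Finset.sum_congr rfl hT, ← Finset.mul_sum]
  have hs := aux_conv k
  have step1 : C * ∑ j ∈ range (k+1), (1:ℝ)/((((j:ℝ)+1)^2) * ((((k-j:ℕ)):ℝ)+1)^2)
      ≤ C * (8/((k:ℝ)+1)^2) := mul_le_mul_of_nonneg_left hs hCpos.le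
  refine le_trans step1 ?_
  rw [hVf, hC]
  have hfle : (m₁.factorial : ℝ) * (m₂.factorial : ℝ) ≤ ((m₁+m₂).factorial : ℝ) := by
    exact_mod_cast Nat.le_of_dvd (Nat.factorial_pos _)
      (Nat.factorial_mul_factorial_dvd_factorial_add m₁ m₂)
  have hdle : (((m₁+m₂:ℕ):ℝ)+1)^2 ≤ ((m₁:ℝ)+1)^2 * ((m₂:ℝ)+1)^2 := by
    have hx : (0:ℝ) ≤ (m₁:ℝ) := Nat.cast_nonneg _
    have hy : (0:ℝ) ≤ (m₂:ℝ) := Nat.cast_nonneg _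
    have h : (m₁:ℝ)+(m₂:ℝ)+1 ≤ ((m₁:ℝ)+1)*((m₂:ℝ)+1) := by nlinarith [mul_nonneg hx hy]
    calc (((m₁+m₂:ℕ):ℝ)+1)^2 = ((m₁:ℝ)+(m₂:ℝ)+1)^2 := by push_cast; ring
      _ ≤ (((m₁:ℝ)+1)*((m₂:ℝ)+1))^2 := by
          exact pow_le_pow_left₀ (by positivity) h 2
      _ = ((m₁:ℝ)+1)^2 * ((m₂:ℝ)+1)^2 := by ring
  have key : (m₁.factorial : ℝ) * (m₂.factorial : ℝ) / (((m₁:ℝ)+1)^2 * ((m₂:ℝ)+1)^2)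
      ≤ ((m₁+m₂).factorial : ℝ) / ((((m₁+m₂:ℕ)):ℝ)+1)^2 :=
    div_le_div₀ (by positivity) hfle (by positivity) hdle
  have hpos : (0:ℝ) < (k.factorial : ℝ) * L^k * V^(k+1) * V / ((k:ℝ)+1)^2 := by positivity
  have e1 : (k.factorial : ℝ) * ((m₁.factorial : ℝ) * (m₂.factorial : ℝ)) /
      (((m₁:ℝ)+1)^2 * (((m₂:ℝ)+1)^2)) * L^k * V^(k+2) * (8/((k:ℝ)+1)^2)
      = 8 * ((m₁.factorial : ℝ) * (m₂.factorial : ℝ) / (((m₁:ℝ)+1)^2 * ((m₂:ℝ)+1)^2))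
        * ((k.factorial : ℝ) * L^k * V^(k+1) * V / ((k:ℝ)+1)^2) := by
    rw [pow_succ V (k+1)]; ring
  have hmid : 8 * ((m₁.factorial : ℝ) * (m₂.factorial : ℝ) / (((m₁:ℝ)+1)^2 * ((m₂:ℝ)+1)^2))
        * ((k.factorial : ℝ) * L^k * V^(k+1) * V / ((k:ℝ)+1)^2)
      ≤ 16 * (((m₁+m₂).factorial : ℝ) / ((((m₁+m₂:ℕ)):ℝ)+1)^2)
        * ((k.factorial : ℝ) * L^k * V^(k+1) * V / ((k:ℝ)+1)^2) := by
    refine mul_le_mul_of_nonneg_right ?_ hpos.le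
    refine mul_le_mul (by norm_num) key (by positivity) (by norm_num)
  have e2 : 16 * (((m₁+m₂).factorial : ℝ) / ((((m₁+m₂:ℕ)):ℝ)+1)^2)
        * ((k.factorial : ℝ) * L^k * V^(k+1) * V / ((k:ℝ)+1)^2)
      = 16 * V * (((m₁+m₂).factorial : ℝ) * (k.factorial : ℝ) /
          ((((m₁+m₂:ℕ)):ℝ)+1)^2 / ((k:ℝ)+1)^2 * L^k * V^(k+1)) := by ring
  rw [e1]
  refine le_trans hmid ?_
  rw [e2, div_div]
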